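/- Let v_1,...,v_d be vectors in R^3 such that every three cyclically consecutive vectors v_{i-1}, v_i, v_{i+1} are linearly independent. Then the 2d × 3d matrix M whose first d rows are block-diagonal with blocks v_i^T (row i has v_i^T in block i), and whose last d rows have v_{i+1}^T in block i and v_i^T in block i+1 (cyclically), has rank 2d. -/

import Mathlib

open Matrix

theorem stmt4 (d : ℕ) (hd : 3 ≤ d) [NeZero d] (v : Fin d → Fin 3 → ℝ)
    (hindep : ∀ i : Fin d, LinearIndependent ℝ ![v (i - 1), v i, v (i + 1)])
    (M : Matrix (Fin d ⊕ Fin d) (Fin d × Fin 3) ℝ)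
    (hM1 : ∀ (i j : Fin d) (c : Fin 3), M (Sum.inl i) (j, c) = if j = i then v i c else 0)
    (hM2 : ∀ (i j : Fin d) (c : Fin 3), M (Sum.inr i) (j, c) =
      if j = i then v (i + 1) c else if j = i + 1 then v i c else 0) :
    M.rank = 2 * d := by
  obtain ⟨e, rfl⟩ : ∃ e, d = e + 3 := ⟨d - 3, by omega⟩
  have hone : (1 : Fin (e + 3)) ≠ 0 := Fin.ne_of_val_ne (by simp)
  have hli : LinearIndependent ℝ M := by
    refine Fintype.linearIndependent_iff.mpr ?_
    intro g hg
    -- key: for each j, the coefficients g (inl j), g (inr j), g (inr (j-1)) vanish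
    have key : ∀ j : Fin (e + 3), g (Sum.inl j) = 0 ∧ g (Sum.inr j) = 0 := by
      intro j
      have hsum : ∀ c : Fin 3,
          g (Sum.inr (j - 1)) * v (j - 1) c + g (Sum.inl j) * v j c
            + g (Sum.inr j) * v (j + 1) c = 0 := by
        intro c
        have h0 := congrFun hg (j, c)
        simp only [Finset.sum_apply, Pi.smul_apply, smul_eq_mul, Pi.zero_apply,
          Fintype.sum_sum_type, hM1, hM2] at h0
        have e1 : ∑ i : Fin (e + 3), g (Sum.inl i) * (if j = i then v i c else 0)
            = g (Sum.inl j) * v j c := by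
          rw [Finset.sum_eq_single j]
          · simp
          · intro i _ hi
            simp [Ne.symm hi]
          · simp
        have e2 : ∑ i : Fin (e + 3), g (Sum.inr i) *
            (if j = i then v (i + 1) c else if j = i + 1 then v i c else 0)
            = g (Sum.inr j) * v (j + 1) c + g (Sum.inr (j - 1)) * v (j - 1) c := by
          have : ∀ i : Fin (e + 3), g (Sum.inr i) *
              (if j = i then v (i + 1) c else if j = i + 1 then v i c else 0)
              = (if i = j then g (Sum.inr j) * v (j + 1) c else 0)
                + (if i = j - 1 then g (Sum.inr (j - 1)) * v (j - 1) c else 0) := by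
            intro i
            rcases eq_or_ne i j with rfl | hij
            · have : i ≠ i - 1 := by
                intro h
                exact hone (by rwa [eq_comm, sub_eq_self] at h)
              simp [this]
            · rcases eq_or_ne i (j - 1) with rfl | hij2
              · have h1 : j = (j - 1) + 1 := (sub_add_cancel j 1).symm
                have h2 : j ≠ j - 1 := by
                  intro h
                  exact hone (by rwa [eq_comm, sub_eq_self] at h)
                rw [if_neg (fun h => h2 h), if_pos h1, if_neg hij, if_pos rfl, zero_add]
              · have h1 : j ≠ i := Ne.symm hij
                have h2 : j ≠ i + 1 := by
                  intro h
                  exact hij2 (by rw [h]; exact (add_sub_cancel_right i 1).symm)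
                simp [h1, h2, hij, hij2]
          rw [Finset.sum_congr rfl (fun i _ => this i), Finset.sum_add_distrib]
          simp
        rw [e1, e2] at h0
        linarith
      have := Fintype.linearIndependent_iff.mp (hindep j)
        ![g (Sum.inr (j - 1)), g (Sum.inl j), g (Sum.inr j)]
        (by
          funext c
          have := hsum c
          simp [Fin.sum_univ_three]
          linarith)
      exact ⟨this 1, this 2⟩
    intro s
    rcases s with i | i
    · exact (key i).1
    · exact (key i).2
  rw [hli.rank_matrix]
  simp [two_mul]
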